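/- Soundness of the type equality algorithm: if the judgment V; C; · ⊢ A ≡ B is derivable by the algorithmic rules, then ∀V. C ⇒ A ≡ B, i.e., for every ground substitution σ over V with ⊨ C[σ], the closed types A[σ] and B[σ] are related by some type bisimulation. -/
import Mathlib


/-- Closed arithmetically refined session types: internal/external choice over
finite label sets (labels are naturals), tensor, lolli, unit, assertions ?{φ}A,
assumptions !{φ}A, existential and universal quantification over naturals
(represented as families of types), and indexed type variables V[ē] with a
list of (closed) natural-number indices. -/
inductive RTy : Type 1 where
  | ichoice (L : Finset ℕ) (f : ℕ → RTy)
  | echoice (L : Finset ℕ) (f : ℕ → RTy)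
  | tensor (A B : RTy)
  | lolli (A B : RTy)
  | one
  | assrt (φ : Prop) (A : RTy)   -- ?{φ}. A
  | assum (φ : Prop) (A : RTy)   -- !{φ}. A
  | exi (f : ℕ → RTy)            -- ∃n. A
  | all (f : ℕ → RTy)            -- ∀n. A
  | var (v : ℕ) (es : List ℕ)    -- V[ē]

/-- A signature assigns to each indexed type variable and each list of indices
the (instantiated) defining type. -/
abbrev Sig := ℕ → List ℕ → RTy

/-- One-step unfolding of indexed type definitions. -/
def unfoldT (Sg : Sig) : RTy → RTy
  | .var v es => Sg v es
  | A => A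

/-- One step of the bisimulation game on closed refined session types. -/
def RStep (R : RTy → RTy → Prop) : RTy → RTy → Prop
  | .ichoice L f, .ichoice L' g => L = L' ∧ ∀ ℓ ∈ L, R (f ℓ) (g ℓ)
  | .echoice L f, .echoice L' g => L = L' ∧ ∀ ℓ ∈ L, R (f ℓ) (g ℓ)
  | .tensor A₁ A₂, .tensor B₁ B₂ => R A₁ B₁ ∧ R A₂ B₂
  | .lolli A₁ A₂, .lolli B₁ B₂ => R A₁ B₁ ∧ R A₂ B₂
  | .one, .one => True
  | .assrt φ A, .assrt ψ B => (φ ∧ ψ ∧ R A B) ∨ (¬φ ∧ ¬ψ)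
  | .assum φ A, .assum ψ B => (φ ∧ ψ ∧ R A B) ∨ (¬φ ∧ ¬ψ)
  | .exi f, .exi g => ∀ i : ℕ, R (f i) (g i)
  | .all f, .all g => ∀ i : ℕ, R (f i) (g i)
  | _, _ => False

/-- `R` is a type bisimulation on closed refined session types. -/
def IsBisim (Sg : Sig) (R : RTy → RTy → Prop) : Prop :=
  ∀ A B, R A B → RStep R (unfoldT Sg A) (unfoldT Sg B)

/-- Type equality A ≡ B: some type bisimulation relates A and B. -/
def REq (Sg : Sig) (A B : RTy) : Prop :=
  ∃ R, IsBisim Sg R ∧ R A B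

/-! The algorithmic type equality judgment V; C; Γ ⊢ A ≡ B.  Arithmetic
variables are drawn from ℕ; a ground substitution is σ : ℕ → ℕ.  Open types
(types with free arithmetic variables) are represented as families of closed
types indexed by ground substitutions, open index expressions as functions
(ℕ → ℕ) → ℕ, and open constraints as predicates on substitutions. -/

/-- A closure ⟨V'; C' ⊢ V₁[ē₁'] ≡ V₂[ē₂']⟩. -/
structure Closure : Type 1 where
  C : (ℕ → ℕ) → Prop
  V₁ : ℕ
  V₂ : ℕ
  e₁ : List ((ℕ → ℕ) → ℕ)
  e₂ : List ((ℕ → ℕ) → ℕ)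

/-- Instantiating a list of open index expressions by a ground substitution. -/
def instL (e : List ((ℕ → ℕ) → ℕ)) (σ : ℕ → ℕ) : List ℕ := e.map (fun x => x σ)

/-- The algorithmic rules: structural decomposition for ⊕, &, ⊗, ⊸, 1;
assertion/assumption rules requiring C ⊨ φ ↔ ψ and continuing with C ∧ φ;
quantifier rules introducing a fresh variable k (freshness of k w.r.t. C is
expressed by C being invariant under updating k); a ⊥ rule; reflexivity for
equal type variables with provably equal indices; the expand rule unfolding
both definitions while recording the closure in Γ; and the def rule closing a
branch when all instances of the goal are instances of a recorded closure. -/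
inductive Alg (Sg : Sig) :
    ((ℕ → ℕ) → Prop) → Set Closure → ((ℕ → ℕ) → RTy) → ((ℕ → ℕ) → RTy) → Prop where
  | ichoice {C Γ} {L : Finset ℕ} {f g : ℕ → (ℕ → ℕ) → RTy} :
      (∀ ℓ ∈ L, Alg Sg C Γ (f ℓ) (g ℓ)) →
      Alg Sg C Γ (fun σ => .ichoice L (fun ℓ => f ℓ σ))
                 (fun σ => .ichoice L (fun ℓ => g ℓ σ))
  | echoice {C Γ} {L : Finset ℕ} {f g : ℕ → (ℕ → ℕ) → RTy} :
      (∀ ℓ ∈ L, Alg Sg C Γ (f ℓ) (g ℓ)) →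
      Alg Sg C Γ (fun σ => .echoice L (fun ℓ => f ℓ σ))
                 (fun σ => .echoice L (fun ℓ => g ℓ σ))
  | tensor {C Γ A₁ A₂ B₁ B₂} :
      Alg Sg C Γ A₁ B₁ → Alg Sg C Γ A₂ B₂ →
      Alg Sg C Γ (fun σ => .tensor (A₁ σ) (A₂ σ)) (fun σ => .tensor (B₁ σ) (B₂ σ))
  | lolli {C Γ A₁ A₂ B₁ B₂} :
      Alg Sg C Γ A₁ B₁ → Alg Sg C Γ A₂ B₂ →
      Alg Sg C Γ (fun σ => .lolli (A₁ σ) (A₂ σ)) (fun σ => .lolli (B₁ σ) (B₂ σ))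
  | one {C Γ} : Alg Sg C Γ (fun _ => .one) (fun _ => .one)
  | assrt {C Γ} {φ ψ : (ℕ → ℕ) → Prop} {A B} :
      (∀ σ, C σ → (φ σ ↔ ψ σ)) →
      Alg Sg (fun σ => C σ ∧ φ σ) Γ A B →
      Alg Sg C Γ (fun σ => .assrt (φ σ) (A σ)) (fun σ => .assrt (ψ σ) (B σ))
  | assum {C Γ} {φ ψ : (ℕ → ℕ) → Prop} {A B} :
      (∀ σ, C σ → (φ σ ↔ ψ σ)) →
      Alg Sg (fun σ => C σ ∧ φ σ) Γ A B →
      Alg Sg C Γ (fun σ => .assum (φ σ) (A σ)) (fun σ => .assum (ψ σ) (B σ))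
  | exi {C Γ} {k : ℕ} {A B : (ℕ → ℕ) → RTy} :
      (∀ σ i, C σ → C (Function.update σ k i)) →   -- k fresh for C
      Alg Sg C Γ A B →
      Alg Sg C Γ (fun σ => .exi (fun i => A (Function.update σ k i)))
                 (fun σ => .exi (fun i => B (Function.update σ k i)))
  | all {C Γ} {k : ℕ} {A B : (ℕ → ℕ) → RTy} :
      (∀ σ i, C σ → C (Function.update σ k i)) →
      Alg Sg C Γ A B →
      Alg Sg C Γ (fun σ => .all (fun i => A (Function.update σ k i)))
                 (fun σ => .all (fun i => B (Function.update σ k i)))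
  | bot {C Γ A B} : (∀ σ, ¬ C σ) → Alg Sg C Γ A B
  | refl {C Γ V} {e e' : List ((ℕ → ℕ) → ℕ)} :
      (∀ σ, C σ → instL e σ = instL e' σ) →
      Alg Sg C Γ (fun σ => .var V (instL e σ)) (fun σ => .var V (instL e' σ))
  | expd {C Γ V₁ V₂} {e₁ e₂ : List ((ℕ → ℕ) → ℕ)} :
      Alg Sg C (insert ⟨C, V₁, V₂, e₁, e₂⟩ Γ)
        (fun σ => Sg V₁ (instL e₁ σ)) (fun σ => Sg V₂ (instL e₂ σ)) →
      Alg Sg C Γ (fun σ => .var V₁ (instL e₁ σ)) (fun σ => .var V₂ (instL e₂ σ))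
  | tdef {C Γ V₁ V₂} {e₁ e₂ : List ((ℕ → ℕ) → ℕ)} {cl : Closure} :
      cl ∈ Γ → cl.V₁ = V₁ → cl.V₂ = V₂ →
      (∀ σ, C σ → ∃ σ', cl.C σ' ∧ instL cl.e₁ σ' = instL e₁ σ ∧
        instL cl.e₂ σ' = instL e₂ σ) →
      Alg Sg C Γ (fun σ => .var V₁ (instL e₁ σ)) (fun σ => .var V₂ (instL e₂ σ))

/-- Well-formed closure contexts: every closure was recorded at an expand
node, i.e. comes with a derivation of the corresponding unfolded sequent. -/
inductive Good (Sg : Sig) : Set Closure → Prop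
  | nil : Good Sg ∅
  | cons {Γ : Set Closure} {cl : Closure} : Good Sg Γ →
      Alg Sg cl.C (insert cl Γ)
        (fun σ => Sg cl.V₁ (instL cl.e₁ σ)) (fun σ => Sg cl.V₂ (instL cl.e₂ σ)) →
      Good Sg (insert cl Γ)

/-- Ground instances of conclusions of derivable sequents (with good contexts). -/
def MemR (Sg : Sig) (X Y : RTy) : Prop :=
  ∃ C Γ A B σ, Alg Sg C Γ A B ∧ Good Sg Γ ∧ C σ ∧ X = A σ ∧ Y = B σ

/-- The candidate bisimulation: the diagonal together with all ground instances. -/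
def Rrel (Sg : Sig) (X Y : RTy) : Prop := X = Y ∨ MemR Sg X Y

lemma good_mem {Sg : Sig} {Γ : Set Closure} (hg : Good Sg Γ) {cl : Closure}
    (hcl : cl ∈ Γ) :
    ∃ Γ', Good Sg (insert cl Γ') ∧
      Alg Sg cl.C (insert cl Γ')
        (fun σ => Sg cl.V₁ (instL cl.e₁ σ)) (fun σ => Sg cl.V₂ (instL cl.e₂ σ)) := by
  induction hg with
  | nil => exact absurd hcl (Set.notMem_empty cl)
  | @cons Γ cl₀ hg hd ih =>
      rcases hcl with h | h
      · subst h; exact ⟨Γ, Good.cons hg hd, hd⟩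
      · exact ih h

lemma diag_step {Sg : Sig} {Z : RTy} (hZ : ∀ v l, Z ≠ RTy.var v l) :
    RStep (Rrel Sg) Z Z := by
  cases Z with
  | ichoice L f => exact ⟨rfl, fun ℓ _ => Or.inl rfl⟩
  | echoice L f => exact ⟨rfl, fun ℓ _ => Or.inl rfl⟩
  | tensor A B => exact ⟨Or.inl rfl, Or.inl rfl⟩
  | lolli A B => exact ⟨Or.inl rfl, Or.inl rfl⟩
  | one => trivial
  | assrt φ A =>
      rcases Classical.em φ with hφ | hφ
      · exact Or.inl ⟨hφ, hφ, Or.inl rfl⟩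
      · exact Or.inr ⟨hφ, hφ⟩
  | assum φ A =>
      rcases Classical.em φ with hφ | hφ
      · exact Or.inl ⟨hφ, hφ, Or.inl rfl⟩
      · exact Or.inr ⟨hφ, hφ⟩
  | exi f => exact fun i => Or.inl rfl
  | all f => exact fun i => Or.inl rfl
  | var v es => exact absurd rfl (hZ v es)

/-- Head lemma: a derivable sequent whose conclusion instance is not a type
variable satisfies one step of the bisimulation game directly. -/
lemma head_step {Sg : Sig} {C : (ℕ → ℕ) → Prop} {Γ : Set Closure}
    {A B : (ℕ → ℕ) → RTy} (d : Alg Sg C Γ A B) (hg : Good Sg Γ)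
    {σ : ℕ → ℕ} (hσ : C σ) (hA : ∀ v l, A σ ≠ RTy.var v l) :
    RStep (Rrel Sg) (A σ) (B σ) := by
  cases d with
  | @ichoice C Γ L f g h =>
      exact ⟨rfl, fun ℓ hℓ => Or.inr ⟨C, Γ, f ℓ, g ℓ, σ, h ℓ hℓ, hg, hσ, rfl, rfl⟩⟩
  | @echoice C Γ L f g h =>
      exact ⟨rfl, fun ℓ hℓ => Or.inr ⟨C, Γ, f ℓ, g ℓ, σ, h ℓ hℓ, hg, hσ, rfl, rfl⟩⟩
  | @tensor C Γ A₁ A₂ B₁ B₂ h₁ h₂ =>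
      exact ⟨Or.inr ⟨C, Γ, A₁, B₁, σ, h₁, hg, hσ, rfl, rfl⟩,
             Or.inr ⟨C, Γ, A₂, B₂, σ, h₂, hg, hσ, rfl, rfl⟩⟩
  | @lolli C Γ A₁ A₂ B₁ B₂ h₁ h₂ =>
      exact ⟨Or.inr ⟨C, Γ, A₁, B₁, σ, h₁, hg, hσ, rfl, rfl⟩,
             Or.inr ⟨C, Γ, A₂, B₂, σ, h₂, hg, hσ, rfl, rfl⟩⟩
  | one => trivial
  | @assrt C Γ φ ψ A B hiff d' =>
      rcases Classical.em (φ σ) with hφ | hφ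
      · exact Or.inl ⟨hφ, (hiff σ hσ).1 hφ,
          Or.inr ⟨_, Γ, A, B, σ, d', hg, ⟨hσ, hφ⟩, rfl, rfl⟩⟩
      · exact Or.inr ⟨hφ, fun hψ => hφ ((hiff σ hσ).2 hψ)⟩
  | @assum C Γ φ ψ A B hiff d' =>
      rcases Classical.em (φ σ) with hφ | hφ
      · exact Or.inl ⟨hφ, (hiff σ hσ).1 hφ,
          Or.inr ⟨_, Γ, A, B, σ, d', hg, ⟨hσ, hφ⟩, rfl, rfl⟩⟩
      · exact Or.inr ⟨hφ, fun hψ => hφ ((hiff σ hσ).2 hψ)⟩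
  | @exi C Γ k A B hk d' =>
      exact fun i => Or.inr ⟨C, Γ, A, B, Function.update σ k i, d', hg,
        hk σ i hσ, rfl, rfl⟩
  | @all C Γ k A B hk d' =>
      exact fun i => Or.inr ⟨C, Γ, A, B, Function.update σ k i, d', hg,
        hk σ i hσ, rfl, rfl⟩
  | bot hbot => exact absurd hσ (hbot σ)
  | @refl C Γ V e e' hee => exact absurd rfl (hA V (instL e σ))
  | @expd C Γ V₁ V₂ e₁ e₂ d' => exact absurd rfl (hA V₁ (instL e₁ σ))
  | @tdef C Γ V₁ V₂ e₁ e₂ cl hcl hV₁ hV₂ hside =>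
      exact absurd rfl (hA V₁ (instL e₁ σ))

lemma unfold_nonvar {Sg : Sig} (hc : ∀ v es w es', Sg v es ≠ RTy.var w es')
    (X : RTy) : ∀ v l, unfoldT Sg X ≠ RTy.var v l := by
  intro v l
  cases X <;> simp [unfoldT]
  exact hc _ _ v l

lemma rrel_isBisim {Sg : Sig} (hc : ∀ v es w es', Sg v es ≠ RTy.var w es') :
    IsBisim Sg (Rrel Sg) := by
  intro X Y hXY
  rcases hXY with h | ⟨C, Γ, A, B, σ, d, hg, hσ, rfl, rfl⟩
  · subst h
    exact diag_step (unfold_nonvar hc _)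
  · cases d with
    | @ichoice C Γ L f g h =>
        exact head_step (Alg.ichoice h) hg hσ (by intro v l; simp)
    | @echoice C Γ L f g h =>
        exact head_step (Alg.echoice h) hg hσ (by intro v l; simp)
    | @tensor C Γ A₁ A₂ B₁ B₂ h₁ h₂ =>
        exact head_step (Alg.tensor h₁ h₂) hg hσ (by intro v l; simp)
    | @lolli C Γ A₁ A₂ B₁ B₂ h₁ h₂ =>
        exact head_step (Alg.lolli h₁ h₂) hg hσ (by intro v l; simp)
    | one => exact head_step Alg.one hg hσ (by intro v l; simp)
    | @assrt C Γ φ ψ A B hiff d' =>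
        exact head_step (Alg.assrt hiff d') hg hσ (by intro v l; simp)
    | @assum C Γ φ ψ A B hiff d' =>
        exact head_step (Alg.assum hiff d') hg hσ (by intro v l; simp)
    | @exi C Γ k A B hk d' =>
        exact head_step (Alg.exi hk d') hg hσ (by intro v l; simp)
    | @all C Γ k A B hk d' =>
        exact head_step (Alg.all hk d') hg hσ (by intro v l; simp)
    | bot hbot => exact absurd hσ (hbot σ)
    | @refl C Γ V e e' hee =>
        show RStep (Rrel Sg) (Sg V (instL e σ)) (Sg V (instL e' σ))
        rw [← hee σ hσ]
        exact diag_step (fun v l => hc _ _ v l)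
    | @expd C Γ V₁ V₂ e₁ e₂ d' =>
        show RStep (Rrel Sg) (Sg V₁ (instL e₁ σ)) (Sg V₂ (instL e₂ σ))
        exact head_step d' (Good.cons hg d') hσ (fun v l => hc _ _ v l)
    | @tdef C Γ V₁ V₂ e₁ e₂ cl hcl hV₁ hV₂ hside =>
        obtain ⟨σ', hC', he₁, he₂⟩ := hside σ hσ
        obtain ⟨Γ', hg', d''⟩ := good_mem hg hcl
        have := head_step d'' hg' hC' (fun v l => hc _ _ v l)
        show RStep (Rrel Sg) (Sg V₁ (instL e₁ σ)) (Sg V₂ (instL e₂ σ))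
        rw [← hV₁, ← hV₂, ← he₁, ← he₂]
        exact this

/-- soundness of the type equality algorithm: for a contractive
(valid) signature, if V; C; · ⊢ A ≡ B is derivable then ∀V. C ⇒ A ≡ B: every
ground instance of A and B (under a substitution satisfying C) is related by
some type bisimulation. -/
theorem alg_sound (Sg : Sig) (hc : ∀ v es w es', Sg v es ≠ RTy.var w es')
    (C : (ℕ → ℕ) → Prop) (A B : (ℕ → ℕ) → RTy)
    (h : Alg Sg C ∅ A B) :
    ∀ σ : ℕ → ℕ, C σ → REq Sg (A σ) (B σ) := by
  intro σ hσ
  exact ⟨Rrel Sg, rrel_isBisim hc,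
    Or.inr ⟨C, ∅, A, B, σ, h, Good.nil, hσ, rfl, rfl⟩⟩
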